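/- Let E₀, E₁, …, E_h be real normed vector spaces, and for k = 1,…,h let g_k : E_{k-1} → E_k be Lipschitz with constant L_k ≥ 0. Let (Ω, ℱ, μ) be a probability space and, for k = 1,…,h, let e_k : Ω → E_k be strongly measurable random elements with E[‖e_k‖²] ≤ s_k < ∞. Fix x ∈ E₀ and define, for each ω ∈ Ω, ỹ₀ = y₀(ω) = x, ỹ_k = g_k(ỹ_{k-1}) and y_k(ω) = g_k(y_{k-1}(ω)) + e_k(ω). Then E[‖y_h − ỹ_h‖²] ≤ h · Σ_{k=1}^h ( Π_{j=k+1}^h L_j² ) s_k, where the empty product equals 1. -/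
import Mathlib


open MeasureTheory

/-- Mean-squared noise amplification through a chain of Lipschitz maps: if
`ỹ_{k+1} = g_k(ỹ_k)` is the noiseless recursion and `y_{k+1}(ω) = g_k(y_k(ω)) + e_k(ω)`
is the noisy recursion with common initial point `x`, where each `g_k` is Lipschitz
with constant `L_k ≥ 0` and the random noises satisfy `E‖e_k‖² ≤ s_k < ∞`, then
`E‖y_h − ỹ_h‖² ≤ h · Σ_{k<h} (Π_{k+1 ≤ j < h} L_j²) s_k` (empty products equal 1). -/
theorem noise_propagation_mean_squared_bound
    {Ω : Type*} [MeasurableSpace Ω] (μ : Measure Ω) [IsProbabilityMeasure μ]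
    (h : ℕ) (E : ℕ → Type*) [∀ k, NormedAddCommGroup (E k)] [∀ k, NormedSpace ℝ (E k)]
    (g : ∀ k, E k → E (k + 1)) (L : ℕ → ℝ) (hL : ∀ k, 0 ≤ L k)
    (hLip : ∀ k, ∀ u v : E k, ‖g k u - g k v‖ ≤ L k * ‖u - v‖)
    (e : ∀ k, Ω → E (k + 1)) (hmeas : ∀ k, StronglyMeasurable (e k))
    (s : ℕ → ℝ)
    (hInt : ∀ k, Integrable (fun ω => ‖e k ω‖ ^ 2) μ)
    (hs : ∀ k, ∫ ω, ‖e k ω‖ ^ 2 ∂μ ≤ s k)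
    (x : E 0)
    (ytil : ∀ k, E k) (y : ∀ k, Ω → E k)
    (hytil0 : ytil 0 = x) (hytil : ∀ k, ytil (k + 1) = g k (ytil k))
    (hy0 : ∀ ω, y 0 ω = x) (hy : ∀ k ω, y (k + 1) ω = g k (y k ω) + e k ω) :
    ∫ ω, ‖y h ω - ytil h‖ ^ 2 ∂μ ≤
      h * ∑ k ∈ Finset.range h, (∏ j ∈ Finset.Ico (k + 1) h, L j ^ 2) * s k := by
  -- pointwise bound on the deviation
  have key : ∀ n ω, ‖y n ω - ytil n‖ ≤
      ∑ k ∈ Finset.range n, (∏ j ∈ Finset.Ico (k + 1) n, L j) * ‖e k ω‖ := by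
    intro n
    induction n with
    | zero => intro ω; simp [hy0, hytil0]
    | succ n ih =>
      intro ω
      rw [Finset.sum_range_succ]
      have h1 : ‖y (n + 1) ω - ytil (n + 1)‖ ≤ L n * ‖y n ω - ytil n‖ + ‖e n ω‖ := by
        rw [hy n ω, hytil n]
        calc ‖g n (y n ω) + e n ω - g n (ytil n)‖
            ≤ ‖g n (y n ω) - g n (ytil n)‖ + ‖e n ω‖ := by
              rw [add_sub_right_comm]; exact norm_add_le _ _
          _ ≤ L n * ‖y n ω - ytil n‖ + ‖e n ω‖ := by
              gcongr; exact hLip n _ _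
      refine h1.trans ?_
      have h2 : L n * ‖y n ω - ytil n‖ ≤
          ∑ k ∈ Finset.range n, (∏ j ∈ Finset.Ico (k + 1) (n + 1), L j) * ‖e k ω‖ := by
        calc L n * ‖y n ω - ytil n‖
            ≤ L n * ∑ k ∈ Finset.range n, (∏ j ∈ Finset.Ico (k + 1) n, L j) * ‖e k ω‖ :=
              mul_le_mul_of_nonneg_left (ih ω) (hL n)
          _ = ∑ k ∈ Finset.range n, (∏ j ∈ Finset.Ico (k + 1) (n + 1), L j) * ‖e k ω‖ := by
              rw [Finset.mul_sum]
              refine Finset.sum_congr rfl fun k hk => ?_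
              rw [Finset.prod_Ico_succ_top (Finset.mem_range.mp hk), ← mul_assoc,
                mul_comm (L n)]
      have : (∏ j ∈ Finset.Ico (n + 1) (n + 1), L j) * ‖e n ω‖ = ‖e n ω‖ := by simp
      rw [this]
      exact add_le_add h2 le_rfl
  -- squared pointwise bound via Cauchy–Schwarz
  set G : Ω → ℝ := fun ω =>
    (h : ℝ) * ∑ k ∈ Finset.range h, (∏ j ∈ Finset.Ico (k + 1) h, L j ^ 2) * ‖e k ω‖ ^ 2 with hG
  have keysq : ∀ ω, ‖y h ω - ytil h‖ ^ 2 ≤ G ω := by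
    intro ω
    have h0 : (0:ℝ) ≤ ∑ k ∈ Finset.range h, (∏ j ∈ Finset.Ico (k + 1) h, L j) * ‖e k ω‖ :=
      Finset.sum_nonneg fun k _ => mul_nonneg (Finset.prod_nonneg fun j _ => hL j) (norm_nonneg _)
    calc ‖y h ω - ytil h‖ ^ 2
        ≤ (∑ k ∈ Finset.range h, (∏ j ∈ Finset.Ico (k + 1) h, L j) * ‖e k ω‖) ^ 2 := by
          exact pow_le_pow_left₀ (norm_nonneg _) (key h ω) 2
      _ ≤ (Finset.range h).card *
            ∑ k ∈ Finset.range h, ((∏ j ∈ Finset.Ico (k + 1) h, L j) * ‖e k ω‖) ^ 2 :=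
          sq_sum_le_card_mul_sum_sq
      _ = G ω := by
          simp only [Finset.card_range, hG]
          congr 1
          refine Finset.sum_congr rfl fun k _ => ?_
          rw [mul_pow, Finset.prod_pow]
  -- G is integrable
  have hGint : Integrable G μ := by
    refine (Integrable.const_mul ?_ _)
    exact integrable_finset_sum _ fun k _ => (hInt k).const_mul _
  have hmono : ∫ ω, ‖y h ω - ytil h‖ ^ 2 ∂μ ≤ ∫ ω, G ω ∂μ := by
    refine integral_mono_of_nonneg (Filter.Eventually.of_forall fun ω => by positivity) hGint
      (Filter.Eventually.of_forall keysq)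
  refine hmono.trans ?_
  have : ∫ ω, G ω ∂μ = (h : ℝ) * ∑ k ∈ Finset.range h,
      (∏ j ∈ Finset.Ico (k + 1) h, L j ^ 2) * ∫ ω, ‖e k ω‖ ^ 2 ∂μ := by
    rw [hG, integral_const_mul, integral_finset_sum _ fun k _ => (hInt k).const_mul _]
    simp_rw [integral_const_mul]
  rw [this]
  gcongr with k hk
  · exact hs k
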